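/- Let M be a finite von Neumann algebra with faithful normal trace τ, and let F be the convex hull of the set of coefficients Φ_ξ of vectors ξ = Σ a_i ⊗ b_i lying in correspondences H_φ associated to normal completely positive maps φ : M → M with compact extension operator T_φ. Then F is a convex cone; for every b ∈ M and Φ ∈ F the completely positive map x ↦ b* Φ(x) b belongs to F; and the extension operator T_Φ is a compact operator on L²(M,τ) for every Φ ∈ F. -/

import Mathlib

/- Common framework: a finite von Neumann algebra `M` on a Hilbert space `H` with a faithful
normal trace, normal completely positive maps, bimodular maps, and the `2`-norm. -/

open scoped ComplexOrder InnerProductSpace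
open Filter Topology
open scoped Pointwise
set_option synthInstance.maxHeartbeats 1000000
set_option maxHeartbeats 1000000

noncomputable section

universe u

variable (H : Type u) [NormedAddCommGroup H] [InnerProductSpace ℂ H] [CompleteSpace H]

/-- The `2`-norm `‖x‖₂ = τ(x*x)^{1/2}` associated to a trace functional `τ`. -/
def twoNorm (τ : (H →L[ℂ] H) →ₗ[ℂ] ℂ) (x : H →L[ℂ] H) : ℝ :=
  Real.sqrt (τ (star x * x)).re

/-- A linear functional on `B(H)` is normal (relative to the von Neumann algebra `M`) if it is
continuous for the weak operator topology on bounded balls of `M`. -/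
def IsNormalFunctional (M : VonNeumannAlgebra H) (τ : (H →L[ℂ] H) →ₗ[ℂ] ℂ) : Prop :=
  ∀ r : ℝ, ContinuousOn
    (fun T : H →WOT[ℂ] H => τ ((ContinuousLinearMapWOT.linearEquiv (σ := RingHom.id ℂ) (E := H) (F := H) ℂ) T))
    ((ContinuousLinearMapWOT.linearEquiv (σ := RingHom.id ℂ) (E := H) (F := H) ℂ).symm '' (Metric.closedBall 0 r ∩ (M : Set (H →L[ℂ] H))))

/-- A faithful normal tracial state on a von Neumann algebra `M ⊆ B(H)`. -/
structure FaithfulNormalTrace (M : VonNeumannAlgebra H) where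
  τ : (H →L[ℂ] H) →ₗ[ℂ] ℂ
  pos : ∀ x ∈ M, 0 ≤ τ (star x * x)
  faithful : ∀ x ∈ M, τ (star x * x) = 0 → x = 0
  tracial : ∀ x ∈ M, ∀ y ∈ M, τ (x * y) = τ (y * x)
  unital : τ 1 = 1
  normal : IsNormalFunctional H M τ

/-- A linear map `φ : B(H) → B(H)` is normal (as a map of the von Neumann algebra `M`) if it is
continuous for the weak operator topology on bounded balls of `M`. -/
def IsNormalMap (M : VonNeumannAlgebra H) (φ : (H →L[ℂ] H) →ₗ[ℂ] (H →L[ℂ] H)) : Prop :=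
  ∀ r : ℝ, ContinuousOn
    (fun T : H →WOT[ℂ] H =>
      (ContinuousLinearMapWOT.linearEquiv (σ := RingHom.id ℂ) (E := H) (F := H) ℂ).symm (φ ((ContinuousLinearMapWOT.linearEquiv (σ := RingHom.id ℂ) (E := H) (F := H) ℂ) T)))
    ((ContinuousLinearMapWOT.linearEquiv (σ := RingHom.id ℂ) (E := H) (F := H) ℂ).symm '' (Metric.closedBall 0 r ∩ (M : Set (H →L[ℂ] H))))

/-- Complete positivity of `φ` on `M`: for all `x₁, …, xₙ ∈ M` and `ξ₁, …, ξₙ ∈ H`,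
`∑_{i,j} ⟨ξᵢ, φ(xᵢ* xⱼ) ξⱼ⟩ ≥ 0`. -/
def IsCompletelyPositive (M : VonNeumannAlgebra H)
    (φ : (H →L[ℂ] H) →ₗ[ℂ] (H →L[ℂ] H)) : Prop :=
  ∀ (n : ℕ) (x : Fin n → (H →L[ℂ] H)) (ξ : Fin n → H), (∀ i, x i ∈ M) →
    0 ≤ ∑ i, ∑ j, ⟪ξ i, φ (star (x i) * x j) (ξ j)⟫_ℂ

/-- `φ` is a normal completely positive map from `M` to `M`. -/
def IsNormalCP (M : VonNeumannAlgebra H) (φ : (H →L[ℂ] H) →ₗ[ℂ] (H →L[ℂ] H)) : Prop :=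
  (∀ x ∈ M, φ x ∈ M) ∧ IsNormalMap H M φ ∧ IsCompletelyPositive H M φ

/-- `N`-bimodularity of a map `φ : M → M`: `φ(axb) = aφ(x)b` for `a, b ∈ N`, `x ∈ M`. -/
def IsBimodular (M N : VonNeumannAlgebra H) (φ : (H →L[ℂ] H) →ₗ[ℂ] (H →L[ℂ] H)) : Prop :=
  ∀ a ∈ N, ∀ b ∈ N, ∀ x ∈ M, φ (a * x * b) = a * φ x * b

section AuxCoefficient

variable {H : Type u} [NormedAddCommGroup H] [InnerProductSpace ℂ H] [CompleteSpace H]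
variable {M : VonNeumannAlgebra H} {tr : FaithfulNormalTrace H M} {Ω : H}

/-- `‖u* Ω‖ = ‖u Ω‖` for `u ∈ M`, by traciality. -/
lemma aux_norm_star_omega (hΩ : ∀ x ∈ M, ∀ y ∈ M, ⟪x Ω, y Ω⟫_ℂ = tr.τ (star x * y))
    {u : H →L[ℂ] H} (hu : u ∈ M) : ‖(star u) Ω‖ = ‖u Ω‖ := by
  have h1 : ⟪u Ω, u Ω⟫_ℂ = tr.τ (star u * u) := hΩ u hu u hu
  have h2 : ⟪(star u) Ω, (star u) Ω⟫_ℂ = tr.τ (u * star u) := by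
    simpa using hΩ (star u) (star_mem hu) (star u) (star_mem hu)
  have h3 : tr.τ (u * star u) = tr.τ (star u * u) := tr.tracial u hu (star u) (star_mem hu)
  have h4 : ⟪(star u) Ω, (star u) Ω⟫_ℂ = ⟪u Ω, u Ω⟫_ℂ := by rw [h1, h2, h3]
  rw [inner_self_eq_norm_sq_to_K, inner_self_eq_norm_sq_to_K] at h4
  have h5 : (‖(star u) Ω‖ : ℝ) ^ 2 = ‖u Ω‖ ^ 2 := by exact_mod_cast h4
  calc ‖(star u) Ω‖ = Real.sqrt (‖(star u) Ω‖ ^ 2) := (Real.sqrt_sq (norm_nonneg _)).symm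
    _ = Real.sqrt (‖u Ω‖ ^ 2) := by rw [h5]
    _ = ‖u Ω‖ := Real.sqrt_sq (norm_nonneg _)

/-- `‖x c Ω‖ ≤ ‖c‖ ‖x Ω‖` for `x, c ∈ M`. -/
lemma aux_mul_omega_norm_le (hΩ : ∀ x ∈ M, ∀ y ∈ M, ⟪x Ω, y Ω⟫_ℂ = tr.τ (star x * y))
    {x c : H →L[ℂ] H} (hx : x ∈ M) (hc : c ∈ M) : ‖(x * c) Ω‖ ≤ ‖c‖ * ‖x Ω‖ := by
  have h1 : ‖(x * c) Ω‖ = ‖(star (x * c)) Ω‖ := (aux_norm_star_omega hΩ (mul_mem hx hc)).symm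
  rw [h1, star_mul]
  have h2 : (star c * star x) Ω = star c ((star x) Ω) := rfl
  rw [h2]
  calc ‖star c ((star x) Ω)‖ ≤ ‖star c‖ * ‖(star x) Ω‖ := (star c).le_opNorm _
    _ = ‖c‖ * ‖x Ω‖ := by rw [norm_star, aux_norm_star_omega hΩ hx]

/-- Well-definedness of right multiplication on `MΩ`. -/
lemma aux_mul_omega_eq (hΩ : ∀ x ∈ M, ∀ y ∈ M, ⟪x Ω, y Ω⟫_ℂ = tr.τ (star x * y))
    {x y c : H →L[ℂ] H} (hx : x ∈ M) (hy : y ∈ M) (hc : c ∈ M)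
    (h : x Ω = y Ω) : (x * c) Ω = (y * c) Ω := by
  have h2 : ‖((x - y) * c) Ω‖ ≤ ‖c‖ * ‖(x - y) Ω‖ := aux_mul_omega_norm_le hΩ (sub_mem hx hy) hc
  rw [ContinuousLinearMap.sub_apply, h, sub_self, norm_zero, mul_zero] at h2
  have h3 : ((x - y) * c) Ω = 0 := norm_le_zero_iff.mp h2
  rw [sub_mul, ContinuousLinearMap.sub_apply] at h3
  exact sub_eq_zero.mp h3

/-- Existence of the bounded "right multiplication by `c`" operator on `L²(M)`. -/
lemma aux_exists_rmul (hΩ : ∀ x ∈ M, ∀ y ∈ M, ⟪x Ω, y Ω⟫_ℂ = tr.τ (star x * y))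
    (hcyc : Dense {ξ : H | ∃ x ∈ M, ξ = x Ω}) {c : H →L[ℂ] H} (hc : c ∈ M) :
    ∃ R : H →L[ℂ] H, ∀ x ∈ M, R (x Ω) = (x * c) Ω := by
  let p : Submodule ℂ H :=
    { carrier := {ξ : H | ∃ x ∈ M, ξ = x Ω}
      add_mem' := by
        rintro ξ η ⟨x, hx, rfl⟩ ⟨y, hy, rfl⟩
        exact ⟨x + y, add_mem hx hy, (ContinuousLinearMap.add_apply x y Ω).symm⟩
      zero_mem' := ⟨0, zero_mem M, by simp⟩
      smul_mem' := by
        rintro r ξ ⟨x, hx, rfl⟩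
        exact ⟨r • x, M.toStarSubalgebra.smul_mem hx r,
          rfl⟩ }
  have hmem : ∀ ξ : p, ∃ x, x ∈ M ∧ (ξ : H) = x Ω := fun ξ => ξ.2
  let rep : p → (H →L[ℂ] H) := fun ξ => (hmem ξ).choose
  have hrep₁ : ∀ ξ : p, rep ξ ∈ M := fun ξ => (hmem ξ).choose_spec.1
  have hrep₂ : ∀ ξ : p, (ξ : H) = (rep ξ) Ω := fun ξ => (hmem ξ).choose_spec.2
  have hwd : ∀ (ξ : p) (y : H →L[ℂ] H), y ∈ M → (ξ : H) = y Ω →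
      (rep ξ * c) Ω = (y * c) Ω := fun ξ y hy h =>
    aux_mul_omega_eq hΩ (hrep₁ ξ) hy hc ((hrep₂ ξ).symm.trans h)
  let f₀ : p →ₗ[ℂ] H :=
    { toFun := fun ξ => (rep ξ * c) Ω
      map_add' := by
        intro ξ η
        show (rep (ξ + η) * c) Ω = (rep ξ * c) Ω + (rep η * c) Ω
        rw [hwd (ξ + η) (rep ξ + rep η) (add_mem (hrep₁ ξ) (hrep₁ η)) (by
            rw [Submodule.coe_add, hrep₂ ξ, hrep₂ η, ContinuousLinearMap.add_apply]),
          add_mul, ContinuousLinearMap.add_apply]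
      map_smul' := by
        intro r ξ
        show (rep (r • ξ) * c) Ω = r • ((rep ξ * c) Ω)
        rw [hwd (r • ξ) (r • rep ξ) (M.toStarSubalgebra.smul_mem (hrep₁ ξ) r) (by
            rw [Submodule.coe_smul, hrep₂ ξ, ContinuousLinearMap.smul_apply]),
          smul_mul_assoc, ContinuousLinearMap.smul_apply] }
  have hbound : ∀ ξ : p, ‖f₀ ξ‖ ≤ ‖c‖ * ‖ξ‖ := by
    intro ξ
    have h := aux_mul_omega_norm_le hΩ (hrep₁ ξ) hc
    rw [← hrep₂ ξ] at h
    exact h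
  let f : p →L[ℂ] H := f₀.mkContinuous ‖c‖ hbound
  have hdense : DenseRange ⇑(p.subtypeL) := hcyc.denseRange_val
  refine ⟨f.extend p.subtypeL, ?_⟩
  intro x hx
  have hxmem : x Ω ∈ p := ⟨x, hx, rfl⟩
  have h1 : x Ω = p.subtypeL ⟨x Ω, hxmem⟩ := rfl
  rw [h1, ContinuousLinearMap.extend_eq (h_dense := hdense) (h_e := isUniformEmbedding_subtype_val.isUniformInducing)]
  exact hwd ⟨x Ω, hxmem⟩ x hx rfl

/-- Finite sums of compact operators are compact. -/
lemma aux_isCompactOperator_sum {ι : Type*} (s : Finset ι) (f : ι → (H →L[ℂ] H))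
    (hf : ∀ i ∈ s, IsCompactOperator ⇑(f i)) : IsCompactOperator ⇑(∑ i ∈ s, f i) := by
  classical
  induction s using Finset.induction_on with
  | empty => simpa using (isCompactOperator_zero : IsCompactOperator (0 : H → H))
  | insert _ _ hi ih =>
    rename_i a s'
    rw [Finset.sum_insert hi]
    have h1 : IsCompactOperator (⇑(f a) + ⇑(∑ i ∈ s', f i)) :=
      (hf a (Finset.mem_insert_self a s')).add
        (ih fun j hj => hf j (Finset.mem_insert_of_mem hj))
    have h2 : ⇑(f a + ∑ i ∈ s', f i) = ⇑(f a) + ⇑(∑ i ∈ s', f i) := rfl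
    rw [h2]
    exact h1

end AuxCoefficient

/-- **Lemma 4.7.** Let `F` be the convex hull of the set of coefficients `Φ_ξ` of finite-rank
vectors `ξ = ∑ aᵢ ⊗ bᵢ` of correspondences `H_φ` associated to normal completely positive maps
`φ : M → M` with compact extension operator (so `Φ_ξ(x) = ∑_{i,j} bᵢ* φ(aᵢ* x aⱼ) bⱼ`).  Then
`F` is a convex cone, `F` is stable under `Φ ↦ b*Φ(·)b` for every `b ∈ M`, and every `Φ ∈ F`
has a compact extension operator on `L²(M,τ)`. -/
theorem coefficient_convex_cone
    (M : VonNeumannAlgebra H) (tr : FaithfulNormalTrace H M)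
    -- `H` is the standard form `L²(M,τ)` with trace vector `Ω`
    (Ω : H) (hΩ : ∀ x ∈ M, ∀ y ∈ M, ⟪x Ω, y Ω⟫_ℂ = tr.τ (star x * y))
    (hcyc : Dense {ξ : H | ∃ x ∈ M, ξ = x Ω})
    -- the set `S` of coefficients of finite-rank vectors in correspondences `H_φ`
    (S F : Set ((H →L[ℂ] H) →ₗ[ℂ] (H →L[ℂ] H)))
    (hS : S = {Φ | ∃ φ : (H →L[ℂ] H) →ₗ[ℂ] (H →L[ℂ] H), IsNormalCP H M φ ∧
      (∃ T : H →L[ℂ] H, IsCompactOperator ⇑T ∧ ∀ x ∈ M, T (x Ω) = (φ x) Ω) ∧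
      ∃ (n : ℕ) (a b : Fin n → (H →L[ℂ] H)), (∀ i, a i ∈ M ∧ b i ∈ M) ∧
        ∀ x : H →L[ℂ] H, Φ x = ∑ i, ∑ j, star (b i) * φ (star (a i) * x * a j) * b j})
    (hF : F = convexHull ℝ S) :
    -- `F` is a convex cone
    Convex ℝ F ∧ (∀ Φ ∈ F, ∀ c : ℝ, 0 < c → c • Φ ∈ F) ∧
    -- `F` is stable under conjugation by every `b ∈ M`
    (∀ b ∈ M, ∀ Φ ∈ F, ∀ Ψ : (H →L[ℂ] H) →ₗ[ℂ] (H →L[ℂ] H),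
      (∀ x : H →L[ℂ] H, Ψ x = star b * Φ x * b) → Ψ ∈ F) ∧
    -- every `Φ ∈ F` has compact extension operator
    (∀ Φ ∈ F, ∃ T : H →L[ℂ] H, IsCompactOperator ⇑T ∧ ∀ x ∈ M, T (x Ω) = (Φ x) Ω) := by
  subst hF
  refine ⟨convex_convexHull ℝ S, ?_, ?_, ?_⟩
  · -- positive scaling
    intro Φ hΦ c hc
    have hsub : c • S ⊆ S := by
      rintro _ ⟨Ψ, hΨ, rfl⟩
      rw [hS] at hΨ ⊢
      obtain ⟨φ, hφ, hT, n, a, b, hab, hform⟩ := hΨ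
      refine ⟨φ, hφ, hT, n, a, fun i => ((Real.sqrt c : ℝ) : ℂ) • b i,
        fun i => ⟨(hab i).1, M.toStarSubalgebra.smul_mem (hab i).2 _⟩, ?_⟩
      intro x
      have h1 : (c • Ψ) x = c • Ψ x := rfl
      rw [h1, hform x]
      simp only [star_smul, RCLike.star_def, Complex.conj_ofReal, smul_mul_assoc,
        mul_smul_comm, smul_smul, ← Complex.ofReal_mul, starRingEnd_apply, star_trivial,
        Real.mul_self_sqrt hc.le, Complex.coe_smul, Finset.smul_sum]
    have h2 : c • Φ ∈ c • convexHull ℝ S := Set.smul_mem_smul_set hΦ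
    rw [← convexHull_smul] at h2
    exact convexHull_mono hsub h2
  · -- conjugation stability
    intro b hb Φ hΦ Ψ hΨ
    let Lb : ((H →L[ℂ] H) →ₗ[ℂ] (H →L[ℂ] H)) →ₗ[ℝ] ((H →L[ℂ] H) →ₗ[ℂ] (H →L[ℂ] H)) :=
      { toFun := fun Θ =>
          { toFun := fun x => star b * Θ x * b
            map_add' := by intro x y; show star b * Θ (x + y) * b = _; rw [map_add, mul_add, add_mul]
            map_smul' := by intro r x; show star b * Θ (r • x) * b = _; simp [mul_smul_comm, smul_mul_assoc] }
        map_add' := by intro Θ₁ Θ₂; ext x; simp [mul_add, add_mul]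
        map_smul' := by intro r Θ; ext x; simp [mul_smul_comm, smul_mul_assoc] }
    have hΨ' : Ψ = Lb Φ := LinearMap.ext fun x => hΨ x
    have himg : Lb '' S ⊆ S := by
      rintro _ ⟨Θ, hΘ, rfl⟩
      rw [hS] at hΘ ⊢
      obtain ⟨φ, hφ, hT, n, a, b', hab, hform⟩ := hΘ
      refine ⟨φ, hφ, hT, n, a, fun i => b' i * b,
        fun i => ⟨(hab i).1, mul_mem (hab i).2 hb⟩, ?_⟩
      intro x
      have h1 : (Lb Θ) x = star b * Θ x * b := rfl
      rw [h1, hform x]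
      simp only [Finset.mul_sum, Finset.sum_mul, star_mul, mul_assoc]
    rw [hΨ']
    have h3 := Set.mem_image_of_mem Lb hΦ
    rw [Lb.image_convexHull] at h3
    exact convexHull_mono himg h3
  · -- compact extension operators
    have hSG : S ⊆ {Θ : (H →L[ℂ] H) →ₗ[ℂ] (H →L[ℂ] H) |
        ∃ T : H →L[ℂ] H, IsCompactOperator ⇑T ∧ ∀ x ∈ M, T (x Ω) = (Θ x) Ω} := by
      intro Θ hΘ
      rw [hS] at hΘ
      obtain ⟨φ, ⟨hφmem, hφnorm, hφcp⟩, ⟨T, hTc, hText⟩, n, a, b, hab, hform⟩ := hΘ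
      choose Ra hRa using fun j => aux_exists_rmul hΩ hcyc (hab j).1
      choose Rb hRb using fun j => aux_exists_rmul hΩ hcyc (hab j).2
      refine ⟨∑ i, ∑ j, (star (b i)) ∘L (Rb j) ∘L T ∘L (star (a i)) ∘L (Ra j), ?_, ?_⟩
      · refine aux_isCompactOperator_sum _ _ fun i _ => ?_
        refine aux_isCompactOperator_sum _ _ fun j _ => ?_
        have h1 : IsCompactOperator
            (⇑((star (b i)) ∘L (Rb j)) ∘ (⇑T ∘ ⇑((star (a i)) ∘L (Ra j)))) :=
          (hTc.comp_clm ((star (a i)) ∘L (Ra j))).clm_comp ((star (b i)) ∘L (Rb j))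
        exact h1
      · intro x hx
        rw [hform x, ContinuousLinearMap.sum_apply]
        rw [show ((∑ i, ∑ j, star (b i) * φ (star (a i) * x * a j) * b j) Ω : H)
            = ∑ i, ((∑ j, star (b i) * φ (star (a i) * x * a j) * b j) Ω) from
          ContinuousLinearMap.sum_apply _ _ _]
        refine Finset.sum_congr rfl fun i _ => ?_
        rw [ContinuousLinearMap.sum_apply, ContinuousLinearMap.sum_apply]
        refine Finset.sum_congr rfl fun j _ => ?_
        have hxaj : x * a j ∈ M := mul_mem hx (hab j).1
        have hmem2 : star (a i) * (x * a j) ∈ M := mul_mem (star_mem (hab i).1) hxaj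
        calc ((star (b i)) ∘L (Rb j) ∘L T ∘L (star (a i)) ∘L (Ra j)) (x Ω)
            = star (b i) ((Rb j) (T ((star (a i)) ((Ra j) (x Ω))))) := rfl
          _ = (star (b i) * (φ (star (a i) * (x * a j)) * b j)) Ω := by
              rw [hRa j x hx]
              rw [show (star (a i)) ((x * a j) Ω) = (star (a i) * (x * a j)) Ω from rfl]
              rw [hText _ hmem2, hRb j _ (hφmem _ hmem2)]
              rfl
          _ = (star (b i) * φ (star (a i) * x * a j) * b j) Ω := by
              rw [mul_assoc (star (a i)) x (a j), mul_assoc (star (b i))]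
    intro Φ hΦ
    exact convexHull_min hSG (by
      rintro Θ₁ ⟨T₁, hT₁, hT₁'⟩ Θ₂ ⟨T₂, hT₂, hT₂'⟩ s t hs ht hst
      refine ⟨s • T₁ + t • T₂, ?_, ?_⟩
      · have h1 : IsCompactOperator (s • ⇑T₁ + t • ⇑T₂) := (hT₁.smul s).add (hT₂.smul t)
        have h2 : ⇑(s • T₁ + t • T₂) = s • ⇑T₁ + t • ⇑T₂ := by
          ext ξ; simp
        rw [h2]
        exact h1
      · intro x hx
        simp only [ContinuousLinearMap.add_apply, ContinuousLinearMap.smul_apply,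
          LinearMap.add_apply, LinearMap.smul_apply, hT₁' x hx, hT₂' x hx,
          Pi.add_apply, Pi.smul_apply]) hΦ
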